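/- Let M = (E, H) be a simple matroid with flat lattice L, let A^c be the complemented structure matrix of L, and let B be the restriction of A^c to rows indexed by atoms of L (identified with elements of E). Then the transpose of B is a boolean representation of M: a subset X ⊆ E is independent in M if and only if the columns of Bᵀ indexed by X are independent over the superboolean semiring. -/

import Mathlib

open scoped Classical

/-- The superboolean semiring `SB = {0, 1, 1^ν}`. -/
def SB := Fin 3

instance : DecidableEq SB := inferInstanceAs (DecidableEq (Fin 3))
instance : Fintype SB := inferInstanceAs (Fintype (Fin 3))

def SB.zero : SB := (0 : Fin 3)
def SB.one : SB := (1 : Fin 3)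
/-- The ghost element `1^ν`. -/
def SB.nu : SB := (2 : Fin 3)

def SB.val (a : SB) : ℕ := Fin.val a

instance : Zero SB := ⟨SB.zero⟩
instance : One SB := ⟨SB.one⟩

def SB.add (a b : SB) : SB := (⟨min (a.val + b.val) 2, by omega⟩ : Fin 3)
def SB.mul (a b : SB) : SB := (⟨min (a.val * b.val) 2, by omega⟩ : Fin 3)

instance : Add SB := ⟨SB.add⟩
instance : Mul SB := ⟨SB.mul⟩

instance : AddCommMonoid SB where
  add := (· + ·)
  add_assoc := by decide
  zero_add := by decide
  add_zero := by decide
  add_comm := by decide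
  nsmul := nsmulRec

instance : CommMonoid SB where
  mul := (· * ·)
  mul_assoc := by decide
  one_mul := by decide
  mul_one := by decide
  mul_comm := by decide
  npow := npowRec

/-- The permanent of a square superboolean matrix. -/
def sbPer {n : ℕ} (A : Matrix (Fin n) (Fin n) SB) : SB :=
  ∑ π : Equiv.Perm (Fin n), ∏ i, A (π i) i

/-- A square superboolean matrix is nonsingular when its permanent is `1`. -/
def Nonsingular {n : ℕ} (A : Matrix (Fin n) (Fin n) SB) : Prop := sbPer A = SB.one

/-- Membership in the ghost ideal `{0, 1^ν}`. -/
def SB.IsGhost (a : SB) : Prop := a = SB.zero ∨ a = SB.nu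

/-- A family of superboolean vectors is dependent if some nontrivial boolean
combination of them lies entirely in the ghost ideal. -/
def SBDep {κ ι : Type*} [Fintype κ] (v : κ → ι → SB) : Prop :=
  ∃ α : κ → SB, (∀ k, α k = SB.zero ∨ α k = SB.one) ∧ (∃ k, α k ≠ SB.zero) ∧
    ∀ j : ι, SB.IsGhost (∑ k, α k * v k j)

/-- Independence of a family of superboolean vectors. -/
def SBIndep {κ ι : Type*} [Fintype κ] (v : κ → ι → SB) : Prop := ¬ SBDep v

/-- A matrix is boolean if none of its entries is the ghost `1^ν`. -/
def IsBooleanMat {ι κ : Type*} (A : Matrix ι κ SB) : Prop := ∀ i j, A i j ≠ SB.nu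
/-- A matroid in the sense of Whitney: a nonempty hereditary collection of
independent sets satisfying the exchange axiom. -/
structure PaperMatroid (E : Type*) [Fintype E] where
  Indep : Set E → Prop
  exists_indep : ∃ X, Indep X
  indep_subset : ∀ ⦃X Y : Set E⦄, X ⊆ Y → Indep Y → Indep X
  exchange : ∀ ⦃X Y : Set E⦄, Indep X → Indep Y → Y.ncard = X.ncard + 1 →
    ∃ y ∈ Y \ X, Indep (insert y X)

namespace PaperMatroid

variable {E : Type*} [Fintype E] (M : PaperMatroid E)

/-- A circuit: a minimal dependent set. -/
def Circuit (C : Set E) : Prop := ¬ M.Indep C ∧ ∀ D ⊂ C, M.Indep D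

/-- The closure of `X`: `X` together with all `y` for which some circuit
contained in `X ∪ {y}` contains `y`. -/
def cl (X : Set E) : Set E :=
  X ∪ {y | y ∉ X ∧ ∃ C, M.Circuit C ∧ C ⊆ insert y X ∧ y ∈ C}

/-- A flat (closed set). -/
def Flat (F : Set E) : Prop := M.cl F = F

/-- A simple matroid: every subset of size at most `2` is independent. -/
def Simple : Prop := ∀ X : Set E, X.ncard ≤ 2 → M.Indep X

/-- A basis: a maximal independent set. -/
def Basis (B : Set E) : Prop :=
  M.Indep B ∧ ∀ X : Set E, M.Indep X → B ⊆ X → X = B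

/-- The lattice of flats of `M`, ordered by inclusion. -/
abbrev Flats := {F : Set E // M.Flat F}

end PaperMatroid

/-- The complemented structure matrix of the lattice of flats of `M`:
entry `(F, G)` is `1` iff `F ⊄ G`, and `0` iff `F ⊆ G`. -/
noncomputable def AcM {E : Type*} [Fintype E] (M : PaperMatroid E) :
    Matrix M.Flats M.Flats SB :=
  fun F G => if F.1 ⊆ G.1 then SB.zero else SB.one



section AuxLemmas

open Set

/-! ### Superboolean arithmetic lemmas -/

lemma SB.val_add (a b : SB) : SB.val (a + b) = min (SB.val a + SB.val b) 2 := rfl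

lemma SB.ghost_iff (a : SB) : SB.IsGhost a ↔ SB.val a ≠ 1 := by
  have h3 : SB.val a < 3 := Fin.isLt a
  have h0 : a = SB.zero ↔ SB.val a = 0 := Fin.ext_iff
  have h2 : a = SB.nu ↔ SB.val a = 2 := Fin.ext_iff
  unfold SB.IsGhost
  rw [h0, h2]
  omega

lemma SB.val_sum {κ : Type*} (s : Finset κ) (f : κ → SB) :
    SB.val (∑ k ∈ s, f k) = min (∑ k ∈ s, SB.val (f k)) 2 := by
  classical
  induction s using Finset.induction_on with
  | empty => simp [Finset.sum_empty]; rfl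
  | insert _ _ h ih =>
      rw [Finset.sum_insert h, Finset.sum_insert h, SB.val_add, ih]
      omega

lemma SB.zero_mul' (b : SB) : SB.zero * b = SB.zero := by revert b; decide

lemma SB.one_mul' (b : SB) : SB.one * b = b := by revert b; decide

/-! ### Matroid auxiliary lemmas -/

namespace PaperMatroid

variable {E : Type*} [Fintype E] (M : PaperMatroid E)

lemma indep_empty : M.Indep ∅ := by
  obtain ⟨X, hX⟩ := M.exists_indep
  exact M.indep_subset (Set.empty_subset X) hX

/-- The Mathlib matroid associated to a `PaperMatroid`. -/
noncomputable def toMatroid : Matroid E :=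
  (IndepMatroid.ofFinite (E := (Set.univ : Set E)) Set.finite_univ M.Indep
    M.indep_empty
    (fun I J hJ hIJ => M.indep_subset hIJ hJ)
    (by
      intro I J hI hJ hlt
      obtain ⟨J', hJ'J, hcard⟩ :=
        Set.exists_subset_card_eq (s := J) (n := I.ncard + 1) (by omega)
      have hJ' : M.Indep J' := M.indep_subset hJ'J hJ
      obtain ⟨y, hy, hins⟩ := M.exchange hI hJ' hcard
      exact ⟨y, hJ'J hy.1, hy.2, hins⟩)
    (fun I _ => Set.subset_univ I)).matroid

@[simp] lemma toMatroid_indep {S : Set E} : M.toMatroid.Indep S ↔ M.Indep S := by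
  simp [toMatroid]

@[simp] lemma toMatroid_ground : M.toMatroid.E = Set.univ := by
  simp [toMatroid]

lemma exists_circuit_aux (n : ℕ) :
    ∀ X : Set E, X.ncard ≤ n → ¬ M.Indep X → ∃ C, C ⊆ X ∧ M.Circuit C := by
  induction n with
  | zero =>
      intro X hn h
      have : X = ∅ := (Set.ncard_eq_zero (Set.toFinite X)).1 (Nat.le_antisymm hn (Nat.zero_le _))
      exact absurd (this ▸ M.indep_empty) h
  | succ n ih =>
      intro X hn h
      by_cases hmin : ∀ D ⊂ X, M.Indep D
      · exact ⟨X, subset_rfl, h, hmin⟩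
      · push_neg at hmin
        obtain ⟨D, hDX, hD⟩ := hmin
        have hlt := Set.ncard_lt_ncard hDX (Set.toFinite X)
        obtain ⟨C, hCD, hC⟩ := ih D (by omega) hD
        exact ⟨C, hCD.trans hDX.subset, hC⟩

lemma exists_circuit {X : Set E} (h : ¬ M.Indep X) : ∃ C, C ⊆ X ∧ M.Circuit C :=
  M.exists_circuit_aux X.ncard X le_rfl h

/-- The closure (in the Mathlib sense) of any set is a flat of the paper matroid. -/
lemma flat_closure (Y : Set E) : M.Flat (M.toMatroid.closure Y) := by
  set F := M.toMatroid.closure Y with hF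
  unfold PaperMatroid.Flat PaperMatroid.cl
  apply subset_antisymm
  · rintro y (hy | ⟨hyF, C, hC, hCsub, hyC⟩)
    · exact hy
    · exfalso
      have hCy : M.Indep (C \ {y}) := by
        refine hC.2 _ ⟨Set.diff_subset, fun hsub => ?_⟩
        exact (hsub hyC).2 rfl
      have hNy : M.toMatroid.Indep (C \ {y}) := (M.toMatroid_indep).2 hCy
      have hyn : y ∉ C \ {y} := fun hy' => hy'.2 rfl
      have hnotins : ¬ M.toMatroid.Indep (insert y (C \ {y})) := by
        rw [Set.insert_diff_singleton, Set.insert_eq_of_mem hyC]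
        exact fun hc => hC.1 ((M.toMatroid_indep).1 hc)
      rw [hNy.insert_indep_iff_of_notMem hyn] at hnotins
      have hycl : y ∈ M.toMatroid.closure (C \ {y}) := by
        by_contra hno
        exact hnotins ⟨by simp, hno⟩
      have hCF : C \ {y} ⊆ F := by
        intro z hz
        rcases hCsub hz.1 with h1 | h1
        · exact absurd h1 hz.2
        · exact h1
      have : M.toMatroid.closure (C \ {y}) ⊆ F := by
        rw [hF]
        have := M.toMatroid.closure_subset_closure (Y := M.toMatroid.closure Y) hCF
        rwa [M.toMatroid.closure_closure] at this
      exact hyF (this hycl)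
  · exact Set.subset_union_left

lemma not_mem_closure_of_indep {S : Set E} {x : E} (hS : M.Indep S) (hx : x ∈ S) :
    x ∉ M.toMatroid.closure (S \ {x}) := by
  have h1 : M.toMatroid.Indep (S \ {x}) :=
    (M.toMatroid_indep).2 (M.indep_subset Set.diff_subset hS)
  have h2 : M.toMatroid.Indep (insert x (S \ {x})) := by
    rw [Set.insert_diff_singleton, Set.insert_eq_of_mem hx]
    exact (M.toMatroid_indep).2 hS
  rw [h1.insert_indep_iff_of_notMem (fun hx' => hx'.2 rfl)] at h2
  exact h2.2

end PaperMatroid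

end AuxLemmas

/-- The transpose of the restriction of the complemented structure matrix of the flat
lattice to the rows indexed by atoms (i.e. by elements of the ground set) is a boolean
representation of the simple matroid `M`: a set is independent in `M` iff the
corresponding columns are independent over the superboolean semiring. -/
theorem flats_matrix_represents {E : Type*} [Fintype E] (M : PaperMatroid E)
    (hs : M.Simple) (X : Finset E) :
    M.Indep ↑X ↔
      SBIndep (fun (a : {y // y ∈ X}) (G : M.Flats) =>
        if (a : E) ∈ G.1 then SB.zero else SB.one) := by
  classical
  constructor
  · -- independent in M implies SB-independent
    intro hX hdep
    obtain ⟨α, hα01, ⟨k0, hk0⟩, hghost⟩ := hdep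
    have hk0' : α k0 = SB.one := (hα01 k0).resolve_left hk0
    set T : Finset E :=
      (Finset.univ.filter (fun k : {y // y ∈ X} => α k = SB.one)).image Subtype.val with hT
    set x : E := (k0 : E) with hx
    have hxT : x ∈ T := by
      apply Finset.mem_image.2
      exact ⟨k0, Finset.mem_filter.2 ⟨Finset.mem_univ _, hk0'⟩, rfl⟩
    have hTX : (↑T : Set E) ⊆ (↑X : Set E) := by
      intro t ht
      simp only [hT, Finset.coe_image, Finset.coe_filter, Set.mem_image] at ht
      obtain ⟨k, _, rfl⟩ := ht
      exact k.2
    have hTind : M.Indep (↑T : Set E) := M.indep_subset hTX hX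
    set G : M.Flats := ⟨M.toMatroid.closure ((↑T : Set E) \ {x}), M.flat_closure _⟩ with hG
    have hxG : x ∉ G.1 := M.not_mem_closure_of_indep hTind (by exact_mod_cast hxT)
    have hsubG : (↑T : Set E) \ {x} ⊆ G.1 := by
      apply M.toMatroid.subset_closure
    have h := (SB.ghost_iff _).1 (hghost G)
    rw [SB.val_sum] at h
    apply h
    have hterm : ∀ j : {y // y ∈ X}, j ≠ k0 →
        SB.val (α j * (if (j : E) ∈ G.1 then SB.zero else SB.one)) = 0 := by
      intro j hj
      rcases hα01 j with h0 | h1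
      · rw [h0, SB.zero_mul']; decide
      · have hje : (j : E) ≠ x := fun he => hj (Subtype.ext he)
        have hjT : (j : E) ∈ T := by
          apply Finset.mem_image.2
          exact ⟨j, Finset.mem_filter.2 ⟨Finset.mem_univ _, h1⟩, rfl⟩
        have hjG : (j : E) ∈ G.1 := hsubG ⟨by exact_mod_cast hjT, hje⟩
        rw [h1, SB.one_mul', if_pos hjG]; decide
    have hsum : ∑ k : {y // y ∈ X},
        SB.val (α k * (if (k : E) ∈ G.1 then SB.zero else SB.one)) = 1 := by
      rw [Finset.sum_eq_single_of_mem k0 (Finset.mem_univ k0)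
        (fun j _ hj => hterm j hj)]
      rw [hk0', SB.one_mul', if_neg hxG]
      decide
    rw [hsum]
    rfl
  · -- SB-independent implies independent in M
    intro hind
    by_contra hdep
    obtain ⟨C, hCX, hC⟩ := M.exists_circuit hdep
    apply hind
    refine ⟨fun k => if (k : E) ∈ C then SB.one else SB.zero, ?_, ?_, ?_⟩
    · intro k
      by_cases h : (k : E) ∈ C
      · exact Or.inr (if_pos h)
      · exact Or.inl (if_neg h)
    · have hCne : C.Nonempty := by
        rcases Set.eq_empty_or_nonempty C with h | h
        · exact absurd (h ▸ M.indep_empty) hC.1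
        · exact h
      obtain ⟨c, hc⟩ := hCne
      have hcX : c ∈ X := hCX hc
      refine ⟨⟨c, hcX⟩, ?_⟩
      show (if c ∈ C then SB.one else SB.zero) ≠ SB.zero
      rw [if_pos hc]
      exact fun h => (by decide : SB.one ≠ SB.zero) h
    · intro G
      rw [SB.ghost_iff, SB.val_sum]
      set P : {y // y ∈ X} → Prop := fun k => (k : E) ∈ C ∧ (k : E) ∉ G.1 with hP
      have hcount : ∑ k : {y // y ∈ X},
          SB.val ((if (k : E) ∈ C then SB.one else SB.zero) *
            (if (k : E) ∈ G.1 then SB.zero else SB.one))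
          = (Finset.univ.filter P).card := by
        rw [Finset.card_filter]
        apply Finset.sum_congr rfl
        intro k _
        by_cases h1 : (k : E) ∈ C <;> by_cases h2 : (k : E) ∈ G.1 <;>
          simp only [hP, h1, h2, if_true, if_false, SB.one_mul', SB.zero_mul',
            not_true, not_false_iff, and_true, and_false, false_and, true_and] <;> rfl
      rw [hcount]
      intro hmin
      have hcard : (Finset.univ.filter P).card = 1 := by omega
      obtain ⟨k0, hk0⟩ := Finset.card_eq_one.1 hcard
      have hk0P : P k0 := by
        have : k0 ∈ Finset.univ.filter P := hk0 ▸ Finset.mem_singleton_self k0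
        exact (Finset.mem_filter.1 this).2
      set x : E := (k0 : E) with hx
      have hCsub : C ⊆ insert x G.1 := by
        intro c hc
        by_cases hcG : c ∈ G.1
        · exact Set.mem_insert_of_mem _ hcG
        · have hcX : c ∈ X := hCX hc
          have hmem : (⟨c, hcX⟩ : {y // y ∈ X}) ∈ Finset.univ.filter P :=
            Finset.mem_filter.2 ⟨Finset.mem_univ _, hc, hcG⟩
          rw [hk0] at hmem
          have := Finset.mem_singleton.1 hmem
          exact Set.mem_insert_iff.2 (Or.inl (congrArg Subtype.val this))
      have hxcl : x ∈ M.cl G.1 :=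
        Or.inr ⟨hk0P.2, C, hC, hCsub, hk0P.1⟩
      rw [G.2] at hxcl
      exact hk0P.2 hxcl
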